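/- arXiv:0910.1251 — 2 statements merged into one kernel-verified Lean document; each statement's English description precedes it below -/
import Mathlib

section
/- Let R be an RK-tensor with m > 2 whose Bochner curvature tensor vanishes, B = 0, and suppose S = S'. Then R = (1/(2(m+2)))(φ+ψ)(S) − (τ/(4(m+1)(m+2)))(π₁+π₂), and consequently R satisfies the Kähler identity R(X,Y,Z,U) = R(X,Y,JZ,JU) for all X,Y,Z,U ∈ V. -/
open RealInnerProductSpace
open scoped BigOperators

noncomputable section

/-- A (curried) 4-linear form on `V`. -/
abbrev Tensor4 (V : Type*) [NormedAddCommGroup V] [InnerProductSpace ℝ V] :=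
  V →ₗ[ℝ] V →ₗ[ℝ] V →ₗ[ℝ] V →ₗ[ℝ] ℝ

variable {V : Type*} [NormedAddCommGroup V] [InnerProductSpace ℝ V]

/-- `J` is an orthogonal complex structure: `J ∘ J = -id` and `g(JX, JY) = g(X, Y)`. -/
def OrthJ (J : V →ₗ[ℝ] V) : Prop :=
  (∀ X : V, J (J X) = -X) ∧ (∀ X Y : V, ⟪J X, J Y⟫ = ⟪X, Y⟫)

/-- `R` is a curvature-like tensor. -/
def CurvatureLike (R : Tensor4 V) : Prop :=
  (∀ X Y Z U : V, R X Y Z U = - R Y X Z U) ∧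
  (∀ X Y Z U : V, R X Y Z U = - R X Y U Z) ∧
  (∀ X Y Z U : V, R X Y Z U = R Z U X Y) ∧
  (∀ X Y Z U : V, R X Y Z U + R Y Z X U + R Z X Y U = 0)

/-- `R` is an RK-tensor: `R(X,Y,Z,U) = R(JX,JY,JZ,JU)`. -/
def IsRK (J : V →ₗ[ℝ] V) (R : Tensor4 V) : Prop :=
  ∀ X Y Z U : V, R X Y Z U = R (J X) (J Y) (J Z) (J U)

/-- The tensor `R*` associated to `R` and `J`. -/
def Rstar (J : V →ₗ[ℝ] V) (R : Tensor4 V) (X Y Z U : V) : ℝ :=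
  (3 / 16) * (R X Y Z U + R X Y (J Z) (J U) + R (J X) (J Y) Z U +
      R (J X) (J Y) (J Z) (J U)) +
  (1 / 16) * (R (J X) (J Z) Y U - R (J Y) (J Z) X U + R X Z (J Y) (J U) -
      R Y Z (J X) (J U) + R Y (J Z) (J X) U - R X (J Z) (J Y) U +
      R (J Y) Z X (J U) - R (J X) Z Y (J U))

variable {ι : Type*} [Fintype ι]

/-- The Ricci form `S(X,Y) = Σᵢ R(X,Eᵢ,Eᵢ,Y)`. -/
def ric (b : OrthonormalBasis ι ℝ V) (R : Tensor4 V) (X Y : V) : ℝ :=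
  ∑ i, R X (b i) (b i) Y

/-- `S'(X,Y) = Σᵢ R(X,Eᵢ,JEᵢ,JY)`. -/
def ric' (J : V →ₗ[ℝ] V) (b : OrthonormalBasis ι ℝ V) (R : Tensor4 V) (X Y : V) : ℝ :=
  ∑ i, R X (b i) (J (b i)) (J Y)

/-- `S*(X,Y) = Σᵢ R*(X,Eᵢ,Eᵢ,Y)`. -/
def ricStar (J : V →ₗ[ℝ] V) (b : OrthonormalBasis ι ℝ V) (R : Tensor4 V) (X Y : V) : ℝ :=
  ∑ i, Rstar J R X (b i) (b i) Y

/-- The scalar curvature `τ = Σᵢ S(Eᵢ,Eᵢ)`. -/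
def scal (b : OrthonormalBasis ι ℝ V) (R : Tensor4 V) : ℝ :=
  ∑ i, ric b R (b i) (b i)

/-- `τ' = Σᵢ S'(Eᵢ,Eᵢ)`. -/
def scal' (J : V →ₗ[ℝ] V) (b : OrthonormalBasis ι ℝ V) (R : Tensor4 V) : ℝ :=
  ∑ i, ric' J b R (b i) (b i)

/-- `τ* = Σᵢ S*(Eᵢ,Eᵢ)`. -/
def scalStar (J : V →ₗ[ℝ] V) (b : OrthonormalBasis ι ℝ V) (R : Tensor4 V) : ℝ :=
  ∑ i, ricStar J b R (b i) (b i)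

/-- The operator `φ` applied to a bilinear form `Q`. -/
def phi (Q : V → V → ℝ) (X Y Z U : V) : ℝ :=
  ⟪X, U⟫ * Q Y Z - ⟪X, Z⟫ * Q Y U + ⟪Y, Z⟫ * Q X U - ⟪Y, U⟫ * Q X Z

/-- The operator `ψ` applied to a bilinear form `Q`. -/
def psi (J : V →ₗ[ℝ] V) (Q : V → V → ℝ) (X Y Z U : V) : ℝ :=
  ⟪X, J U⟫ * Q Y (J Z) - ⟪X, J Z⟫ * Q Y (J U) - 2 * ⟪X, J Y⟫ * Q Z (J U) +
  ⟪Y, J Z⟫ * Q X (J U) - ⟪Y, J U⟫ * Q X (J Z) - 2 * ⟪Z, J U⟫ * Q X (J Y)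

/-- `π₁(X,Y,Z,U) = g(X,U)g(Y,Z) − g(X,Z)g(Y,U)`. -/
def pi1 (X Y Z U : V) : ℝ :=
  ⟪X, U⟫ * ⟪Y, Z⟫ - ⟪X, Z⟫ * ⟪Y, U⟫

/-- `π₂(X,Y,Z,U) = g(X,JU)g(Y,JZ) − g(X,JZ)g(Y,JU) − 2g(X,JY)g(Z,JU)`. -/
def pi2 (J : V →ₗ[ℝ] V) (X Y Z U : V) : ℝ :=
  ⟪X, J U⟫ * ⟪Y, J Z⟫ - ⟪X, J Z⟫ * ⟪Y, J U⟫ - 2 * ⟪X, J Y⟫ * ⟪Z, J U⟫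

/-- The generalized Bochner curvature tensor `B*`. -/
def Bstar (m : ℕ) (J : V →ₗ[ℝ] V) (b : OrthonormalBasis ι ℝ V) (R : Tensor4 V)
    (X Y Z U : V) : ℝ :=
  Rstar J R X Y Z U
    - (1 / (2 * ((m : ℝ) + 2))) *
        (phi (ricStar J b R) X Y Z U + psi J (ricStar J b R) X Y Z U)
    + (scalStar J b R / (4 * ((m : ℝ) + 1) * ((m : ℝ) + 2))) *
        (pi1 X Y Z U + pi2 J X Y Z U)

/-- The Bochner curvature tensor `B` of an RK-tensor. -/
def Bochner (m : ℕ) (J : V →ₗ[ℝ] V) (b : OrthonormalBasis ι ℝ V) (R : Tensor4 V)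
    (X Y Z U : V) : ℝ :=
  R X Y Z U
    - (1 / (8 * ((m : ℝ) + 2))) *
        (phi (fun x y => ric b R x y + 3 * ric' J b R x y) X Y Z U +
         psi J (fun x y => ric b R x y + 3 * ric' J b R x y) X Y Z U)
    - (1 / (8 * ((m : ℝ) - 2))) *
        (3 * phi (fun x y => ric b R x y - ric' J b R x y) X Y Z U -
         psi J (fun x y => ric b R x y - ric' J b R x y) X Y Z U)
    + ((scal b R + 3 * scal' J b R) / (16 * ((m : ℝ) + 1) * ((m : ℝ) + 2))) *
        (pi1 X Y Z U + pi2 J X Y Z U)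
    + ((scal b R - scal' J b R) / (16 * ((m : ℝ) - 1) * ((m : ℝ) - 2))) *
        (3 * pi1 X Y Z U - pi2 J X Y Z U)


lemma inner_J_swap {J : V →ₗ[ℝ] V} (hJ : OrthJ J) (x y : V) :
    ⟪J x, y⟫ = -⟪x, J y⟫ := by
  have := hJ.2 x (J y)
  rw [hJ.1 y] at this
  simp only [inner_neg_right] at this
  linarith

lemma sum_Jbasis {J : V →ₗ[ℝ] V} (hJ : OrthJ J) (b : OrthonormalBasis ι ℝ V)
    (R : Tensor4 V) (X Y : V) :
    ∑ i, R X (J (b i)) (J (b i)) Y = ∑ i, R X (b i) (b i) Y := by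
  have hrep3 : ∀ w v : V, R X w v Y = ∑ k, ⟪b k, v⟫ * R X w (b k) Y := by
    intro w v
    conv_lhs => rw [← b.sum_repr' v]
    rw [map_sum, LinearMap.sum_apply]
    simp [map_smul]
  have hrep2 : ∀ v w : V, R X v w Y = ∑ j, ⟪b j, v⟫ * R X (b j) w Y := by
    intro v w
    conv_lhs => rw [← b.sum_repr' v]
    rw [map_sum, LinearMap.sum_apply, LinearMap.sum_apply]
    simp [map_smul]
  calc ∑ i, R X (J (b i)) (J (b i)) Y
      = ∑ i, ∑ j, ∑ k, (⟪b j, J (b i)⟫ * ⟪b k, J (b i)⟫) * R X (b j) (b k) Y := by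
        refine Finset.sum_congr rfl fun i _ => ?_
        rw [hrep2 (J (b i)) (J (b i))]
        refine Finset.sum_congr rfl fun j _ => ?_
        rw [hrep3 (b j) (J (b i)), Finset.mul_sum]
        refine Finset.sum_congr rfl fun k _ => by ring
    _ = ∑ j, ∑ k, (∑ i, ⟪b j, J (b i)⟫ * ⟪b k, J (b i)⟫) * R X (b j) (b k) Y := by
        rw [Finset.sum_comm]
        refine Finset.sum_congr rfl fun j _ => ?_
        rw [Finset.sum_comm]
        simp [Finset.sum_mul]
    _ = ∑ j, ∑ k, ⟪b j, b k⟫ * R X (b j) (b k) Y := by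
        refine Finset.sum_congr rfl fun j _ => Finset.sum_congr rfl fun k _ => ?_
        congr 1
        have key : ∀ i, ⟪b j, J (b i)⟫ * ⟪b k, J (b i)⟫ = ⟪J (b j), b i⟫ * ⟪b i, J (b k)⟫ := by
          intro i
          have e1 := inner_J_swap hJ (b j) (b i)
          have e2 := inner_J_swap hJ (b k) (b i)
          have e3 : ⟪b i, J (b k)⟫ = -⟪b k, J (b i)⟫ := by
            rw [real_inner_comm]; exact e2
          rw [e1, e3]; ring
        rw [Finset.sum_congr rfl fun i _ => key i, b.sum_inner_mul_inner, hJ.2]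
    _ = ∑ j, R X (b j) (b j) Y := by
        refine Finset.sum_congr rfl fun j _ => ?_
        rw [Finset.sum_eq_single j]
        · have h1 : ‖b j‖ = 1 := b.orthonormal.1 j
          rw [real_inner_self_eq_norm_sq, h1]; ring
        · intro k _ hk
          rw [b.orthonormal.2 (Ne.symm hk)]
          ring
        · simp

lemma ric_neg_right (b : OrthonormalBasis ι ℝ V) (R : Tensor4 V) (x y : V) :
    ric b R x (-y) = - ric b R x y := by
  simp [ric]

lemma ric_neg_left (b : OrthonormalBasis ι ℝ V) (R : Tensor4 V) (x y : V) :
    ric b R (-x) y = - ric b R x y := by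
  have h : ∀ a c d, R (-x) a c d = - R x a c d := by
    intro a c d; rw [show -x = (-1:ℝ) • x by simp, map_smul]; simp
  simp [ric, h]

/-- if `B = 0` and `S = S'` then `R` is expressed through `S` and
satisfies the Kähler identity. -/
theorem kaehler_identity_of_Bochner_eq_zero {V : Type*} [NormedAddCommGroup V]
    [InnerProductSpace ℝ V] [FiniteDimensional ℝ V] {m : ℕ}
    (hm : 2 < m) (hdim : Module.finrank ℝ V = 2 * m)
    (J : V →ₗ[ℝ] V) (hJ : OrthJ J) (R : Tensor4 V) (hR : CurvatureLike R)
    (hRK : IsRK J R) (b : OrthonormalBasis (Fin (2 * m)) ℝ V)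
    (hB : ∀ X Y Z U : V, Bochner m J b R X Y Z U = 0)
    (hSS' : ∀ X Y : V, ric b R X Y = ric' J b R X Y) :
    (∀ X Y Z U : V,
      R X Y Z U =
        (1 / (2 * ((m : ℝ) + 2))) * (phi (ric b R) X Y Z U + psi J (ric b R) X Y Z U) -
          (scal b R / (4 * ((m : ℝ) + 1) * ((m : ℝ) + 2))) *
            (pi1 X Y Z U + pi2 J X Y Z U)) ∧
    (∀ X Y Z U : V, R X Y Z U = R X Y (J Z) (J U)) := by
  have hscal : scal' J b R = scal b R := by
    simp [scal', scal, ← hSS']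
  have h1 : ∀ X Y Z U : V,
      R X Y Z U =
        (1 / (2 * ((m : ℝ) + 2))) * (phi (ric b R) X Y Z U + psi J (ric b R) X Y Z U) -
          (scal b R / (4 * ((m : ℝ) + 1) * ((m : ℝ) + 2))) *
            (pi1 X Y Z U + pi2 J X Y Z U) := by
    intro X Y Z U
    have h := hB X Y Z U
    simp only [Bochner, phi, psi, ← hSS', hscal] at h
    simp only [phi, psi]
    simp only [div_eq_mul_inv, mul_inv, one_div] at h ⊢
    linear_combination h
  refine ⟨h1, ?_⟩
  have hJJ : ∀ x y : V, ric b R (J x) (J y) = ric b R x y := by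
    intro x y
    have hterm : ∀ i, R (J x) (b i) (b i) (J y) = R x (J (b i)) (J (b i)) y := by
      intro i
      rw [hRK x (J (b i)) (J (b i)) y, hJ.1 (b i)]
      simp only [map_neg, LinearMap.neg_apply]
      ring
    calc ric b R (J x) (J y) = ∑ i, R x (J (b i)) (J (b i)) y :=
          Finset.sum_congr rfl fun i _ => hterm i
      _ = ric b R x y := sum_Jbasis hJ b R x y
  have hkey : ∀ z u : V, ric b R (J z) u = - ric b R z (J u) := by
    intro z u
    have h2 := hJJ z (J u)
    rw [hJ.1 u, ric_neg_right] at h2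
    linarith
  intro X Y Z U
  rw [h1 X Y Z U, h1 X Y (J Z) (J U)]
  simp only [phi, psi, pi1, pi2, hJ.1, inner_J_swap hJ, hkey, inner_neg_right,
    inner_neg_left, ric_neg_right, ric_neg_left, map_neg, neg_neg, mul_neg, neg_mul]
  ring
end
end

section
/- Let R be an RK-tensor with m > 2 whose Bochner curvature tensor vanishes, B = 0, and suppose S = (τ/(2m))g, S' = (τ'/(2m))g, and τ = 5τ'. Then R = ((5m+1)τ/(20m(m²−1)))π₁ + ((m−3)τ/(20m(m²−1)))π₂; in particular R has constant holomorphic sectional curvature: R(X,JX,JX,X) = (2τ/(5m(m+1)))g(X,X)² for all X ∈ V. -/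
open RealInnerProductSpace
open scoped BigOperators

set_option maxHeartbeats 1000000
noncomputable section

variable {V : Type*} [NormedAddCommGroup V] [InnerProductSpace ℝ V]

variable {ι : Type*} [Fintype ι]

/-- if `B = 0`, `S = (τ/(2m))g`, `S' = (τ'/(2m))g` and `τ = 5τ'`,
then `R` has constant holomorphic sectional curvature. -/
theorem constant_holSec_of_Bochner_eq_zero {V : Type*} [NormedAddCommGroup V]
    [InnerProductSpace ℝ V] [FiniteDimensional ℝ V] {m : ℕ}
    (hm : 2 < m) (hdim : Module.finrank ℝ V = 2 * m)
    (J : V →ₗ[ℝ] V) (hJ : OrthJ J) (R : Tensor4 V) (hR : CurvatureLike R)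
    (hRK : IsRK J R) (b : OrthonormalBasis (Fin (2 * m)) ℝ V)
    (hB : ∀ X Y Z U : V, Bochner m J b R X Y Z U = 0)
    (hS : ∀ X Y : V, ric b R X Y = (scal b R / (2 * (m : ℝ))) * ⟪X, Y⟫)
    (hS' : ∀ X Y : V, ric' J b R X Y = (scal' J b R / (2 * (m : ℝ))) * ⟪X, Y⟫)
    (htau : scal b R = 5 * scal' J b R) :
    (∀ X Y Z U : V,
      R X Y Z U =
        ((5 * (m : ℝ) + 1) * scal b R / (20 * (m : ℝ) * ((m : ℝ) ^ 2 - 1))) * pi1 X Y Z U +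
        (((m : ℝ) - 3) * scal b R / (20 * (m : ℝ) * ((m : ℝ) ^ 2 - 1))) * pi2 J X Y Z U) ∧
    (∀ X : V,
      R X (J X) (J X) X =
        (2 * scal b R / (5 * (m : ℝ) * ((m : ℝ) + 1))) * ⟪X, X⟫ ^ 2) := by
  
  have hmR : (2:ℝ) < (m:ℝ) := by exact_mod_cast hm
  have h0 : (m:ℝ) ≠ 0 := by linarith
  have h1 : (m:ℝ) + 1 ≠ 0 := by linarith
  have h2 : (m:ℝ) + 2 ≠ 0 := by linarith
  have h3 : (m:ℝ) - 1 ≠ 0 := by linarith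
  have h4 : (m:ℝ) - 2 ≠ 0 := by linarith
  have ht' : scal' J b R = scal b R / 5 := by linarith
  have key : ∀ X Y Z U : V,
      R X Y Z U =
        ((5 * (m : ℝ) + 1) * scal b R / (20 * (m : ℝ) * ((m : ℝ) ^ 2 - 1))) * pi1 X Y Z U +
        (((m : ℝ) - 3) * scal b R / (20 * (m : ℝ) * ((m : ℝ) ^ 2 - 1))) * pi2 J X Y Z U := by
    intro X Y Z U
    have h := hB X Y Z U
    simp only [Bochner, phi, psi] at h
    rw [hS, hS, hS, hS, hS, hS, hS, hS, hS, hS] at h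
    rw [hS', hS', hS', hS', hS', hS', hS', hS', hS', hS'] at h
    rw [ht'] at h
    simp only [pi1, pi2] at h ⊢
    have hsq : (m:ℝ)^2 - 1 = ((m:ℝ) - 1) * ((m:ℝ) + 1) := by ring
    rw [hsq]
    set t := scal b R with hts
    set r := R X Y Z U with hr
    set mR := (m:ℝ) with hmm
    set a1 := (⟪X, U⟫ : ℝ)
    set a2 := (⟪X, Z⟫ : ℝ)
    set a3 := (⟪Y, Z⟫ : ℝ)
    set a4 := (⟪Y, U⟫ : ℝ)
    set b1 := (⟪X, J U⟫ : ℝ)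
    set b2 := (⟪X, J Z⟫ : ℝ)
    set b3 := (⟪X, J Y⟫ : ℝ)
    set b4 := (⟪Y, J Z⟫ : ℝ)
    set b5 := (⟪Y, J U⟫ : ℝ)
    set b6 := (⟪Z, J U⟫ : ℝ)
    field_simp at h ⊢
    have hC : (64 * (mR+2) * (mR-2)) ≠ 0 := by positivity
    apply mul_right_cancel₀ hC
    linear_combination h
  refine ⟨key, ?_⟩
  intro X
  have hX0 : (⟪X, J X⟫:ℝ) = 0 := by
    have h1 := hJ.2 X (J X)
    rw [hJ.1, inner_neg_right, real_inner_comm X (J X)] at h1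
    linarith
  have hJX : (⟪J X, X⟫:ℝ) = 0 := by rw [real_inner_comm]; exact hX0
  rw [key X (J X) (J X) X]
  simp only [pi1, pi2, hJ.1, inner_neg_right, hJ.2 X X, hX0, hJX, real_inner_comm (J X) X]
  have h5 : (m:ℝ)^2 - 1 ≠ 0 := by nlinarith
  field_simp
  ring
end
end
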